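/- For 2-by-2 matrices A_j = [[ã_j, b̃_j],[d̃_j, 0]], the (1,1) entries of successive products satisfy the determinant identity: A_{k,n}(11) A_{k+1,n+1}(11) − A_{k+1,n}(11) A_{k,n+1}(11) = −b̃_k d̃_{n+1} ∏_{j=k+1}^{n} det(A_j), where A_{k,n} := A_k A_{k+1} ⋯ A_n and A_{k,n}(ij) denotes its (i,j) entry. -/

import Mathlib

/-- Determinant identity for (1,1) entries of products of
`A j = [[ã j, b̃ j],[d̃ j, 0]]`:
`P k n (1,1) * P (k+1) (n+1) (1,1) − P (k+1) n (1,1) * P k (n+1) (1,1)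
  = − b̃ k * d̃ (n+1) * ∏_{j=k+1}^{n} det (A j)`, where `P k n = A_k ⋯ A_n`. -/
theorem stmt6 (ta tb td : ℕ → ℝ)
    (A : ℕ → Matrix (Fin 2) (Fin 2) ℝ)
    (hA : ∀ j, A j = !![ta j, tb j; td j, 0])
    (P : ℕ → ℕ → Matrix (Fin 2) (Fin 2) ℝ)
    (hP : ∀ k n, P k n = ((List.range' k (n + 1 - k)).map A).prod) :
    ∀ k n : ℕ, k ≤ n →
      P k n 0 0 * P (k+1) (n+1) 0 0 - P (k+1) n 0 0 * P k (n+1) 0 0 =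
        -(tb k * td (n+1)) * ∏ j ∈ Finset.Icc (k+1) n, (A j).det := by
  have hstep : ∀ k n : ℕ, k ≤ n + 1 → P k (n + 1) = P k n * A (n + 1) := by
    intro k n hk
    rw [hP, hP]
    have h1 : n + 1 + 1 - k = (n + 1 - k) + 1 := by omega
    have h2 : k + (n + 1 - k) = n + 1 := by omega
    rw [h1, List.range'_concat]
    simp only [one_mul, h2, List.map_append, List.prod_append,
      List.map_singleton, List.prod_singleton]
  have hkk : ∀ k, P k k = A k := by
    intro k
    rw [hP]
    have : k + 1 - k = 1 := by omega
    rw [this]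
    simp
  have hone : ∀ k, P (k + 1) k = 1 := by
    intro k
    rw [hP]
    have : k + 1 - (k + 1) = 0 := by omega
    rw [this]
    simp
  -- auxiliary identity
  have aux : ∀ k n : ℕ, k ≤ n →
      P k n 0 0 * P (k+1) n 0 1 - P (k+1) n 0 0 * P k n 0 1 =
        -(tb k) * ∏ j ∈ Finset.Icc (k+1) n, (A j).det := by
    intro k n hkn
    induction n with
    | zero =>
        have hk0 : k = 0 := by omega
        subst hk0
        simp [hkk, hone, hA]
    | succ n ih =>
        rcases Nat.lt_or_ge k (n + 1) with h | h
        · have hkn' : k ≤ n := by omega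
          have e1 := hstep k n (by omega)
          have e2 := hstep (k+1) n (by omega)
          have hprod : ∏ j ∈ Finset.Icc (k+1) (n+1), (A j).det =
              (∏ j ∈ Finset.Icc (k+1) n, (A j).det) * (A (n+1)).det := by
            rw [← Finset.prod_Icc_succ_top (by omega)]
          rw [e1, e2, hprod]
          have hdet : (A (n+1)).det = -(tb (n+1) * td (n+1)) := by
            rw [hA]; simp [Matrix.det_fin_two]
          rw [hdet]
          have hmul : ∀ (M : Matrix (Fin 2) (Fin 2) ℝ),
              (M * A (n+1)) 0 0 = M 0 0 * ta (n+1) + M 0 1 * td (n+1) ∧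
              (M * A (n+1)) 0 1 = M 0 0 * tb (n+1) := by
            intro M
            rw [hA]
            constructor <;> simp [Matrix.mul_apply, Fin.sum_univ_two]
          rw [(hmul (P k n)).1, (hmul (P k n)).2, (hmul (P (k+1) n)).1,
            (hmul (P (k+1) n)).2]
          have h3 := ih hkn'
          linear_combination (-(tb (n+1) * td (n+1))) * h3
        · have hk : k = n + 1 := by omega
          subst hk
          simp [hkk, hone, hA]
  intro k n hkn
  have e1 := hstep k n (by omega)
  have e2 := hstep (k+1) n (by omega)
  rw [e1, e2]
  have hmul : ∀ (M : Matrix (Fin 2) (Fin 2) ℝ),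
      (M * A (n+1)) 0 0 = M 0 0 * ta (n+1) + M 0 1 * td (n+1) := by
    intro M
    rw [hA]
    simp [Matrix.mul_apply, Fin.sum_univ_two]
  rw [hmul, hmul]
  have h3 := aux k n hkn
  linear_combination td (n+1) * h3
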